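/- Let F : (ℝ ∪ {−∞})^n → (ℝ ∪ {−∞})^n be a Shapley operator as defined by finite action sets A^{(k)}, B^{(i)} and real rewards (each Min action moving to one or two Max states with equal probability). Let K ⊆ [n] be a dominion of Player Max, let F^K denote the Shapley operator of the subgame induced by K, and suppose x̃ ∈ ℝ^K satisfies x̃ ≤ F^K(x̃). Define x ∈ (ℝ ∪ {−∞})^n by x_k = x̃_k for k ∈ K and x_k = −∞ otherwise. Then x ≤ F(x). -/

import Mathlib

/-- Let `F` be the Shapley operator of a stochastic mean payoff
game, `K` a dominion of Player Max, and `F^K` the Shapley operator of the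
subgame induced by `K` (Max's actions restricted to `B i ∩ K`).  If
`x̃ ∈ ℝ^K` satisfies `x̃ ≤ F^K(x̃)`, then its extension `x` by `-∞` outside `K`
satisfies `x ≤ F(x)`. -/
theorem dominion_subharmonic_extension (n m : ℕ)
    (A : Fin n → Finset (Finset (Fin m))) (hA : ∀ k, (A k).Nonempty)
    (hcard : ∀ k, ∀ a ∈ A k, a.card = 1 ∨ a.card = 2)
    (B : Fin m → Finset (Fin n)) (hB : ∀ i, (B i).Nonempty)
    (rMin : Fin n → Finset (Fin m) → ℝ) (rMax : Fin m → Fin n → ℝ)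
    (F : (Fin n → EReal) → (Fin n → EReal))
    (hF : ∀ (x : Fin n → EReal) (k : Fin n),
      F x k = (A k).inf' (hA k) (fun a =>
        ((rMin k a : ℝ) : EReal) +
          ((((a.card : ℝ)⁻¹ : ℝ)) : EReal) *
            ∑ i ∈ a, (B i).sup (fun l => ((rMax i l : ℝ) : EReal) + x l)))
    (K : Finset (Fin n))
    (hdom : ∀ k ∈ K, ∀ a ∈ A k, ∀ i ∈ a, ∃ l ∈ B i, l ∈ K)
    (xt : Fin n → ℝ)
    (hsub : ∀ k ∈ K, ∀ a ∈ A k,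
      ((xt k : ℝ) : EReal) ≤
        ((rMin k a : ℝ) : EReal) +
          ((((a.card : ℝ)⁻¹ : ℝ)) : EReal) *
            ∑ i ∈ a, (B i ∩ K).sup (fun l => ((rMax i l : ℝ) : EReal) + ((xt l : ℝ) : EReal))) :
    ∀ k, (if k ∈ K then ((xt k : ℝ) : EReal) else ⊥) ≤
      F (fun k' => if k' ∈ K then ((xt k' : ℝ) : EReal) else ⊥) k := by
  intro k
  by_cases hk : k ∈ K
  · simp only [hk, if_pos]
    rw [hF]
    apply Finset.le_inf'
    intro a ha
    refine le_trans (hsub k hk a ha) ?_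
    apply add_le_add_right
    refine mul_le_mul_of_nonneg_left ?_ ?_
    · apply Finset.sum_le_sum
      intro i _
      apply Finset.sup_le
      intro l hl
      rw [Finset.mem_inter] at hl
      calc ((rMax i l : ℝ) : EReal) + ((xt l : ℝ) : EReal)
          = ((rMax i l : ℝ) : EReal) + (if l ∈ K then ((xt l : ℝ) : EReal) else ⊥) := by
            rw [if_pos hl.2]
        _ ≤ _ := Finset.le_sup (f := fun l => ((rMax i l : ℝ) : EReal) + (if l ∈ K then ((xt l : ℝ) : EReal) else ⊥)) hl.1
    · exact_mod_cast inv_nonneg.mpr (Nat.cast_nonneg _)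
  · simp [hk]
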